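/- Over the field of rational functions in x, X, y with x ≠ X, the closed form T(p,q) = ((x^p − X^p)/(x−X))(x+X)x^{q-1}y + ((x^{q-p-1} − X^{q-p-1})/(x−X))x^p X^{p+1}y + ((x^{p-2} − X^{p-2})/(x−X))((x^q − X^q)/(x−X))x²y² + ((x^q − X^q)/(x−X))(x+X)X^{p-2}y² + x^{p+q-1}Y is symmetric in p and q: T(p,q) = T(q,p) for all integers p, q. -/

import Mathlib

set_option maxHeartbeats 1000000 in
private lemma key_lemma_stmt14 {K : Type*} [Field K] (x X y Y a b c d : K)
    (hx : x ≠ 0) (hX : X ≠ 0) (h1 : x - X ≠ 0)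
    (ha : a ≠ 0) (hb : b ≠ 0) (hc : c ≠ 0) (hd : d ≠ 0) :
        (a - b) / (x - X) * (x + X) * (c / x) * y
        + (c / (a * x) - d / (b * X)) / (x - X) * a * (b * X) * y
        + (a / x ^ 2 - b / X ^ 2) / (x - X) * ((c - d) / (x - X)) * x ^ 2 * y ^ 2
        + (c - d) / (x - X) * (x + X) * (b / X ^ 2) * y ^ 2
        + (a * c / x) * Y
      =
        (c - d) / (x - X) * (x + X) * (a / x) * y
        + (a / (c * x) - b / (d * X)) / (x - X) * c * (d * X) * y
        + (c / x ^ 2 - d / X ^ 2) / (x - X) * ((a - b) / (x - X)) * x ^ 2 * y ^ 2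
        + (a - b) / (x - X) * (x + X) * (d / X ^ 2) * y ^ 2
        + (c * a / x) * Y := by
  obtain ⟨s, hs⟩ : ∃ s, x - X = s := ⟨_, rfl⟩
  rw [hs] at h1 ⊢
  field_simp
  have hQ1 : s * x * (a * x * (b * X) * s) ≠ 0 := by
    exact mul_ne_zero (mul_ne_zero h1 hx)
      (mul_ne_zero (mul_ne_zero (mul_ne_zero ha hx) (mul_ne_zero hb hX)) h1)
  have hQ2 : s * x * (c * x * (d * X) * s) ≠ 0 := by
    exact mul_ne_zero (mul_ne_zero h1 hx)
      (mul_ne_zero (mul_ne_zero (mul_ne_zero hc hx) (mul_ne_zero hd hX)) h1)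
  have hS : x ^ 2 * X ^ 2 * s * s ≠ 0 := by
    exact mul_ne_zero (mul_ne_zero (mul_ne_zero (pow_ne_zero 2 hx) (pow_ne_zero 2 hX)) h1) h1
  rw [← hs]
  ring

set_option maxHeartbeats 1000000 in
theorem stmt_14 {K : Type*} [Field K] (x X y Y : K)
    (hx : x ≠ 0) (hX : X ≠ 0) (hxX : x ≠ X)
    (T : ℤ → ℤ → K)
    (hT : ∀ p q : ℤ,
      T p q =
        (x ^ p - X ^ p) / (x - X) * (x + X) * x ^ (q - 1) * y
        + (x ^ (q - p - 1) - X ^ (q - p - 1)) / (x - X) * x ^ p * X ^ (p + 1) * y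
        + (x ^ (p - 2) - X ^ (p - 2)) / (x - X) * ((x ^ q - X ^ q) / (x - X)) * x ^ 2 * y ^ 2
        + (x ^ q - X ^ q) / (x - X) * (x + X) * X ^ (p - 2) * y ^ 2
        + x ^ (p + q - 1) * Y) :
    ∀ p q : ℤ, T p q = T q p := by
  intro p q
  have h1 : x - X ≠ 0 := sub_ne_zero.mpr hxX
  have hxp : x ^ p ≠ 0 := zpow_ne_zero p hx
  have hxq : x ^ q ≠ 0 := zpow_ne_zero q hx
  have hXp : X ^ p ≠ 0 := zpow_ne_zero p hX
  have hXq : X ^ q ≠ 0 := zpow_ne_zero q hX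
  have e2x : x ^ (2:ℤ) = x ^ (2:ℕ) := zpow_ofNat x 2
  have e2X : X ^ (2:ℤ) = X ^ (2:ℕ) := zpow_ofNat X 2
  rw [hT, hT]
  simp only [zpow_sub₀ hx, zpow_sub₀ hX, zpow_add₀ hx, zpow_add₀ hX, zpow_one, e2x, e2X]
  generalize x ^ p = a at *
  generalize X ^ p = b at *
  generalize x ^ q = c at *
  generalize X ^ q = d at *
  have key := key_lemma_stmt14 x X y Y a b c d hx hX h1 hxp hXp hxq hXq
  linear_combination key
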